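/- Let P ≻ 0, F an n×n matrix, G an n×1 matrix with GᵀPG > 0, and K a 1×n matrix. If P - (F - GK)ᵀP(F - GK) ≻ 0, then P - FᵀPF + FᵀPG(GᵀPG)⁻¹GᵀPF ≻ 0. -/

import Mathlib

open Matrix

theorem stmt4 {n : ℕ}
    (P F : Matrix (Fin n) (Fin n) ℝ) (G : Matrix (Fin n) (Fin 1) ℝ)
    (K : Matrix (Fin 1) (Fin n) ℝ)
    (hP : P.PosDef) (q : ℝ) (hq : q = (Gᵀ * P * G) 0 0) (hqpos : 0 < q)
    (hLyap : (P - (F - G * K)ᵀ * P * (F - G * K)).PosDef) :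
    (P - Fᵀ * P * F + q⁻¹ • (Fᵀ * P * G * (Gᵀ * P * F))).PosDef := by
  have hPt : Pᵀ = P := hP.isHermitian
  have hS : Gᵀ * P * G = q • (1 : Matrix (Fin 1) (Fin 1) ℝ) := by
    ext i j
    fin_cases i; fin_cases j
    simp [hq]
  set H : Matrix (Fin 1) (Fin n) ℝ := K - q⁻¹ • (Gᵀ * P * F) with hH
  have key : P - Fᵀ * P * F + q⁻¹ • (Fᵀ * P * G * (Gᵀ * P * F))
      = (P - (F - G * K)ᵀ * P * (F - G * K)) + q • (Hᵀ * H) := by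
    have h1 : Gᵀ * (P * (G * K)) = q • K := by
      have : Gᵀ * P * G * K = q • (1 : Matrix (Fin 1) (Fin 1) ℝ) * K := by rw [hS]
      simpa [Matrix.mul_assoc, Matrix.smul_mul] using this
    simp only [hH, transpose_sub, transpose_mul, transpose_smul, transpose_transpose, hPt,
      Matrix.sub_mul, Matrix.mul_sub, Matrix.smul_mul, Matrix.mul_smul, Matrix.mul_assoc,
      smul_sub, smul_smul, h1]
    match_scalars <;> field_simp <;> ring
  rw [key]
  refine hLyap.add_posSemidef ?_
  have h2 : q • (Hᵀ * H) = (Real.sqrt q • H)ᴴ * (Real.sqrt q • H) := by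
    rw [conjTranspose_smul, Matrix.smul_mul, Matrix.mul_smul, smul_smul,
      conjTranspose_eq_transpose_of_trivial, star_trivial, Real.mul_self_sqrt hqpos.le]
  rw [h2]
  exact posSemidef_conjTranspose_mul_self _
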